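/- Every successor ordinal with its order topology is a CO space, i.e., every closed subset of a compact ordinal α+1 is homeomorphic to an open subset of α+1. -/
import Mathlib

open Set Order

theorem succ_ordinal_CO (α : Ordinal) (C : Set (Set.Iic α)) (hC : IsClosed C) :
    ∃ U : Set (Set.Iic α), IsOpen U ∧ Nonempty (C ≃ₜ U) := by
  rcases C.eq_empty_or_nonempty with rfl | hne
  · refine ⟨∅, isOpen_empty, ⟨⟨Equiv.equivOfIsEmpty _ _, ?_, ?_⟩⟩⟩ <;>
      exact continuous_iff_continuousAt.2 fun x => (Set.notMem_empty _ x.2).elim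
  -- ambient compactness
  have hcomp : IsCompact (Set.Iic α : Set Ordinal) := by
    rw [← Set.Icc_bot]; exact isCompact_Icc
  haveI : CompactSpace (Set.Iic α) := isCompact_iff_compactSpace.mp hcomp
  obtain ⟨m, hmC, hm⟩ := hC.isCompact.exists_isGreatest hne
  -- initial segment embedding
  let ι : ↥C ↪o Set.Iic α := OrderEmbedding.subtype (· ∈ C)
  let g := ι.ltEmbedding.collapse
  set b : Set.Iic α := g ⟨m, hmC⟩ with hb
  have hmono : StrictMono (g : ↥C → Set.Iic α) := fun x y h => g.map_rel_iff.mpr h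
  have hrange : Set.range (g : ↥C → Set.Iic α) = Set.Iic b := by
    ext x
    constructor
    · rintro ⟨c, rfl⟩
      have : c ≤ ⟨m, hmC⟩ := Subtype.coe_le_coe.mp (hm c.2)
      exact hmono.monotone this
    · intro hx
      rcases lt_or_eq_of_le (Set.mem_Iic.mp hx) with h | h
      · exact g.mem_range_of_rel h
      · exact ⟨⟨m, hmC⟩, h.symm⟩
  -- the target open set
  have hUopen : IsOpen (Set.Iic b) := by
    rcases lt_or_eq_of_le (Set.mem_Iic.mp b.2) with h | h
    · have he : Set.Iic b = Set.Iio (⟨b.1 + 1, by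
          rw [Set.mem_Iic, Ordinal.add_one_eq_succ, Order.succ_le_iff]; exact h⟩ : Set.Iic α) := by
        ext x
        simp only [Set.mem_Iic, Set.mem_Iio, ← Subtype.coe_le_coe, ← Subtype.coe_lt_coe,
          Ordinal.add_one_eq_succ, Order.lt_succ_iff]
      rw [he]; exact isOpen_Iio
    · have he : Set.Iic b = Set.univ := by
        ext x
        simp only [Set.mem_Iic, Set.mem_univ, iff_true, ← Subtype.coe_le_coe, h]
        exact x.2
      rw [he]; exact isOpen_univ
  -- continuity of g
  have h1 : ∀ y : Set.Iic α, IsOpen {c : ↥C | (g c : Set.Iic α) < y} := by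
    intro y
    rcases le_or_gt y b with hy | hy
    · have hy' : y ∈ Set.range (g : ↥C → Set.Iic α) := by rw [hrange]; exact hy
      obtain ⟨c₀, rfl⟩ := hy'
      have he : {c : ↥C | (g c : Set.Iic α) < g c₀} = Subtype.val ⁻¹' Set.Iio (c₀ : Set.Iic α) := by
        ext c
        simp only [Set.mem_setOf_eq, Set.mem_preimage, Set.mem_Iio, hmono.lt_iff_lt,
          ← Subtype.coe_lt_coe]
      exact he ▸ (isOpen_Iio.preimage continuous_subtype_val)
    · have he : {c : ↥C | (g c : Set.Iic α) < y} = Set.univ := by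
        ext c
        simp only [Set.mem_setOf_eq, Set.mem_univ, iff_true]
        exact lt_of_le_of_lt (hrange ▸ Set.mem_range_self c : (g c : Set.Iic α) ∈ Set.Iic b) hy
      rw [he]; exact isOpen_univ
  have h2 : ∀ y : Set.Iic α, IsOpen {c : ↥C | y < (g c : Set.Iic α)} := by
    intro y
    rcases lt_or_ge y b with hy | hy
    · have hy' : y ∈ Set.range (g : ↥C → Set.Iic α) := by rw [hrange]; exact le_of_lt hy
      obtain ⟨c₀, rfl⟩ := hy'
      have he : {c : ↥C | (g c₀ : Set.Iic α) < g c} = Subtype.val ⁻¹' Set.Ioi (c₀ : Set.Iic α) := by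
        ext c
        simp only [Set.mem_setOf_eq, Set.mem_preimage, Set.mem_Ioi, hmono.lt_iff_lt,
          ← Subtype.coe_lt_coe]
      exact he ▸ (isOpen_Ioi.preimage continuous_subtype_val)
    · have he : {c : ↥C | y < (g c : Set.Iic α)} = ∅ := by
        ext c
        simp only [Set.mem_setOf_eq, Set.mem_empty_iff_false, iff_false, not_lt]
        exact le_trans (hrange ▸ Set.mem_range_self c : (g c : Set.Iic α) ∈ Set.Iic b) hy
      rw [he]; exact isOpen_empty
  have htop : (inferInstance : TopologicalSpace (Set.Iic α)) =
      TopologicalSpace.generateFrom {s | ∃ a, s = Set.Ioi a ∨ s = Set.Iio a} :=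
    OrderTopology.topology_eq_generate_intervals
  have hgcont : Continuous (g : ↥C → Set.Iic α) := by
    have : @Continuous _ _ _
        (TopologicalSpace.generateFrom {s | ∃ a, s = Set.Ioi a ∨ s = Set.Iio a})
        (g : ↥C → Set.Iic α) := by
      refine continuous_generateFrom_iff.mpr ?_
      rintro s ⟨a, rfl | rfl⟩
      · exact h2 a
      · exact h1 a
    rwa [← htop] at this
  -- the equivalence
  have hmem : ∀ c : ↥C, (g c : Set.Iic α) ∈ Set.Iic b := fun c => hrange ▸ Set.mem_range_self c
  have hbij : Function.Bijective
      (fun c : ↥C => (⟨g c, hmem c⟩ : ↥(Set.Iic b))) := by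
    constructor
    · intro x y h
      exact hmono.injective (Subtype.mk_eq_mk.mp h)
    · rintro ⟨x, hx⟩
      have hx' : x ∈ Set.range (g : ↥C → Set.Iic α) := by rw [hrange]; exact hx
      obtain ⟨c, rfl⟩ := hx'
      exact ⟨c, rfl⟩
  let e : ↥C ≃ ↥(Set.Iic b) := Equiv.ofBijective _ hbij
  haveI : CompactSpace ↥C := isCompact_iff_compactSpace.mp hC.isCompact
  have hcont : Continuous e := hgcont.subtype_mk _
  exact ⟨Set.Iic b, hUopen, ⟨hcont.homeoOfEquivCompactToT2⟩⟩
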